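/- Let S be a semigroup and let F be a family of subsets of S (nonempty, upward hereditary) with the Ramsey property, and suppose β(F), the set of ultrafilters on S all of whose members lie in F, is nonempty. Then β(F) is a left ideal of the Stone–Čech semigroup of ultrafilters (i.e. for every ultrafilter q on S and every p ∈ β(F), the product q·p lies in β(F)) if and only if F is left shift-invariant, i.e. sE = {st : t ∈ E} ∈ F for all s ∈ S and E ∈ F. -/

import Mathlib

/-- The ultrafilter product on a semigroup:
`A ∈ uprod q p ↔ {x : {y : x * y ∈ A} ∈ p} ∈ q`. -/
def uprod {S : Type*} [Semigroup S] (q p : Ultrafilter S) : Ultrafilter S :=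
  q.bind fun x => p.map fun y => x * y

lemma mem_uprod_iff {S : Type*} [Semigroup S] {q p : Ultrafilter S} {A : Set S} :
    A ∈ uprod q p ↔ {x | {y | x * y ∈ A} ∈ p} ∈ q := by
  simp only [uprod, Ultrafilter.bind, Ultrafilter.ofComplNotMemIff, Filter.mem_bind', Ultrafilter.mem_coe, Ultrafilter.mem_map]
  rfl

/-- A finite union of sets not in a Ramsey family is not in the family. -/
lemma sUnion_not_mem {S : Type*} (F : Set (Set S))
    (hFmem : ∀ A ∈ F, A.Nonempty)
    (hFRamsey : ∀ A ∈ F, ∀ A₁ A₂ : Set S, A = A₁ ∪ A₂ → A₁ ∈ F ∨ A₂ ∈ F)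
    {T : Set (Set S)} (hT : T.Finite) (hTF : ∀ B ∈ T, B ∉ F) : ⋃₀ T ∉ F := by
  refine Set.Finite.induction_on (motive := fun T _ => (∀ B ∈ T, B ∉ F) → ⋃₀ T ∉ F) _ hT
    (fun _ h => by simpa using hFmem _ h) ?_ hTF
  intro B T _ _ ih hTF' h
  rw [Set.sUnion_insert] at h
  rcases hFRamsey _ h B (⋃₀ T) rfl with h1 | h1
  · exact hTF' B (Set.mem_insert _ _) h1
  · exact ih (fun C hC => hTF' C (Set.mem_insert_of_mem _ hC)) h1

/-- Existence of an ultrafilter containing a given member of `F` with all members in `F`. -/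
lemma exists_ultrafilter_of_mem {S : Type*} (F : Set (Set S))
    (hFmem : ∀ A ∈ F, A.Nonempty)
    (hFup : ∀ A B : Set S, A ∈ F → A ⊆ B → B ∈ F)
    (hFRamsey : ∀ A ∈ F, ∀ A₁ A₂ : Set S, A = A₁ ∪ A₂ → A₁ ∈ F ∨ A₂ ∈ F)
    {A : Set S} (hA : A ∈ F) :
    ∃ p : Ultrafilter S, A ∈ p ∧ ∀ B ∈ p, B ∈ F := by
  set G : Set (Set S) := insert A {C | ∃ B, B ∉ F ∧ C = Bᶜ} with hG
  have hNeBot : (Filter.generate G).NeBot := by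
    rw [Filter.generate_neBot_iff]
    intro t htG htfin
    -- the union of complements of the elements of `t \ {A}`
    set T : Set (Set S) := compl '' (t \ {A}) with hTdef
    have hTfin : T.Finite := htfin.diff.image _
    have hTnotF : ∀ B ∈ T, B ∉ F := by
      rintro B ⟨C, ⟨hCt, hCA⟩, rfl⟩
      rcases htG hCt with h | ⟨B', hB', rfl⟩
      · exact absurd h hCA
      · simpa using hB'
    have hUnotF : ⋃₀ T ∉ F := sUnion_not_mem F hFmem hFRamsey hTfin hTnotF
    have hdiff : A \ ⋃₀ T ∈ F := by
      rcases hFRamsey A hA (A ∩ ⋃₀ T) (A \ ⋃₀ T) (by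
        ext x; by_cases hx : x ∈ ⋃₀ T <;> simp [hx]) with h | h
      · exact absurd (hFup _ _ h Set.inter_subset_right) hUnotF
      · exact h
    obtain ⟨x, hxA, hxU⟩ := hFmem _ hdiff
    refine ⟨x, ?_⟩
    rw [Set.mem_sInter]
    intro C hCt
    by_cases hCA : C = A
    · exact hCA ▸ hxA
    · by_contra hxC
      exact hxU ⟨Cᶜ, ⟨C, ⟨hCt, hCA⟩, rfl⟩, hxC⟩
  refine ⟨@Ultrafilter.of _ (Filter.generate G) hNeBot, ?_, ?_⟩
  · exact (@Ultrafilter.of_le _ (Filter.generate G) hNeBot)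
      (Filter.mem_generate_of_mem (Set.mem_insert _ _))
  · intro B hB
    by_contra hBF
    have hBc : Bᶜ ∈ Ultrafilter.of (Filter.generate G) :=
      (@Ultrafilter.of_le _ (Filter.generate G) hNeBot)
        (Filter.mem_generate_of_mem (Set.mem_insert_of_mem _ ⟨B, hBF, rfl⟩))
    exact absurd hB (Ultrafilter.compl_mem_iff_notMem.mp hBc)

theorem beta_F_left_ideal_iff_shift_invariant (S : Type*) [Semigroup S]
    (F : Set (Set S)) (hFne : F.Nonempty)
    (hFmem : ∀ A ∈ F, A.Nonempty)
    (hFup : ∀ A B : Set S, A ∈ F → A ⊆ B → B ∈ F)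
    (hFRamsey : ∀ A ∈ F, ∀ A₁ A₂ : Set S, A = A₁ ∪ A₂ → A₁ ∈ F ∨ A₂ ∈ F)
    (hβne : ∃ p : Ultrafilter S, ∀ A ∈ p, A ∈ F) :
    (∀ q p : Ultrafilter S, (∀ A ∈ p, A ∈ F) → ∀ A ∈ uprod q p, A ∈ F) ↔
      (∀ s : S, ∀ E ∈ F, (fun t => s * t) '' E ∈ F) := by
  constructor
  · intro h s E hE
    obtain ⟨p, hEp, hpF⟩ := exists_ultrafilter_of_mem F hFmem hFup hFRamsey hE
    refine h (pure s) p hpF _ ?_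
    rw [mem_uprod_iff, Ultrafilter.mem_pure]
    exact p.sets_of_superset hEp fun y hy => Set.mem_image_of_mem _ hy
  · intro h q p hpF A hA
    rw [mem_uprod_iff] at hA
    obtain ⟨x, hx⟩ := q.nonempty_of_mem hA
    have hEF : {y | x * y ∈ A} ∈ F := hpF _ hx
    have : (fun t => x * t) '' {y | x * y ∈ A} ∈ F := h x _ hEF
    exact hFup _ _ this (by rintro _ ⟨y, hy, rfl⟩; exact hy)
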